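/- Let n ≥ 1 and let Φ⁺ ⊂ ℝⁿ be one of the classical positive root sets A_{n-1}⁺, B_n⁺, C_n⁺, D_n⁺. If α, β ∈ Φ⁺ and β − α is a finite sum (repetitions allowed) of elements of Φ⁺, then there exist u ≥ 1 and γ₁, …, γ_u ∈ Φ⁺ such that β = α + γ₁ + ⋯ + γ_u and, for every 1 ≤ i ≤ u, the partial sum α + γ₁ + ⋯ + γ_i belongs to Φ⁺. -/

import Mathlib

/-- The standard basis vector `ε_i` of `ℝⁿ`. -/
noncomputable def eps (n : ℕ) (i : Fin n) : Fin n → ℝ := Pi.single i 1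

/-- The positive roots of type `A_{n-1}`: `ε_i - ε_j` for `i < j`. -/
def PhiA (n : ℕ) : Set (Fin n → ℝ) :=
  {v | ∃ i j : Fin n, i < j ∧ v = eps n i - eps n j}

/-- The positive roots of type `B_n`: `ε_i - ε_j`, `ε_i + ε_j` for `i < j`, and `ε_i`. -/
def PhiB (n : ℕ) : Set (Fin n → ℝ) :=
  {v | (∃ i j : Fin n, i < j ∧ (v = eps n i - eps n j ∨ v = eps n i + eps n j)) ∨
    ∃ i : Fin n, v = eps n i}

/-- The positive roots of type `C_n`: `ε_i - ε_j`, `ε_i + ε_j` for `i < j`, and `2ε_i`. -/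
def PhiC (n : ℕ) : Set (Fin n → ℝ) :=
  {v | (∃ i j : Fin n, i < j ∧ (v = eps n i - eps n j ∨ v = eps n i + eps n j)) ∨
    ∃ i : Fin n, v = eps n i + eps n i}

/-- The positive roots of type `D_n`: `ε_i - ε_j` and `ε_i + ε_j` for `i < j`. -/
def PhiD (n : ℕ) : Set (Fin n → ℝ) :=
  {v | ∃ i j : Fin n, i < j ∧ (v = eps n i - eps n j ∨ v = eps n i + eps n j)}

def isD (n : ℕ) (v : Fin n → ℝ) : Prop :=
  ∃ i j : Fin n, ∃ a b : ℝ, i ≠ j ∧ (a = 1 ∨ a = -1) ∧ (b = 1 ∨ b = -1) ∧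
    v = a • eps n i + b • eps n j

def isS (n : ℕ) (v : Fin n → ℝ) : Prop :=
  ∃ i : Fin n, ∃ a : ℝ, (a = 1 ∨ a = -1) ∧ v = a • eps n i

def isL (n : ℕ) (v : Fin n → ℝ) : Prop :=
  ∃ i : Fin n, ∃ a : ℝ, (a = 1 ∨ a = -1) ∧ v = (2 * a) • eps n i

def isA (n : ℕ) (v : Fin n → ℝ) : Prop :=
  ∃ i j : Fin n, i ≠ j ∧ v = eps n i - eps n j

/-- helper: recover v from -v = x -/
lemma eq_neg_of_neg_eq {v x : Fin n → ℝ} (h : -v = x) : v = -x := by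
  rw [← h]; simp

lemma repA (n : ℕ) (v : Fin n → ℝ) : (v ∈ PhiA n ∨ -v ∈ PhiA n) ↔ isA n v := by
  constructor
  · rintro (⟨i, j, hij, rfl⟩ | ⟨i, j, hij, h⟩)
    · exact ⟨i, j, ne_of_lt hij, rfl⟩
    · exact ⟨j, i, (ne_of_lt hij).symm, by rw [eq_neg_of_neg_eq h]; module⟩
  · rintro ⟨i, j, hij, rfl⟩
    rcases lt_or_gt_of_ne hij with h | h
    · exact Or.inl ⟨i, j, h, rfl⟩
    · exact Or.inr ⟨j, i, h, by module⟩

lemma repD (n : ℕ) (v : Fin n → ℝ) : (v ∈ PhiD n ∨ -v ∈ PhiD n) ↔ isD n v := by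
  constructor
  · rintro (⟨i, j, hij, rfl | rfl⟩ | ⟨i, j, hij, h | h⟩)
    · exact ⟨i, j, 1, -1, ne_of_lt hij, Or.inl rfl, Or.inr rfl, by module⟩
    · exact ⟨i, j, 1, 1, ne_of_lt hij, Or.inl rfl, Or.inl rfl, by module⟩
    · exact ⟨i, j, -1, 1, ne_of_lt hij, Or.inr rfl, Or.inl rfl, by rw [eq_neg_of_neg_eq h]; module⟩
    · exact ⟨i, j, -1, -1, ne_of_lt hij, Or.inr rfl, Or.inr rfl, by rw [eq_neg_of_neg_eq h]; module⟩
  · rintro ⟨i, j, a, b, hij, (rfl | rfl), (rfl | rfl), rfl⟩ <;>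
      rcases lt_or_gt_of_ne hij with h | h
    · exact Or.inl ⟨i, j, h, Or.inr (by module)⟩
    · exact Or.inl ⟨j, i, h, Or.inr (by module)⟩
    · exact Or.inl ⟨i, j, h, Or.inl (by module)⟩
    · exact Or.inr ⟨j, i, h, Or.inl (by module)⟩
    · exact Or.inr ⟨i, j, h, Or.inl (by module)⟩
    · exact Or.inl ⟨j, i, h, Or.inl (by module)⟩
    · exact Or.inr ⟨i, j, h, Or.inr (by module)⟩
    · exact Or.inr ⟨j, i, h, Or.inr (by module)⟩

lemma repB (n : ℕ) (v : Fin n → ℝ) : (v ∈ PhiB n ∨ -v ∈ PhiB n) ↔ (isD n v ∨ isS n v) := by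
  constructor
  · rintro ((⟨i, j, hij, rfl | rfl⟩ | ⟨i, rfl⟩) | (⟨i, j, hij, h | h⟩ | ⟨i, h⟩))
    · exact Or.inl ⟨i, j, 1, -1, ne_of_lt hij, Or.inl rfl, Or.inr rfl, by module⟩
    · exact Or.inl ⟨i, j, 1, 1, ne_of_lt hij, Or.inl rfl, Or.inl rfl, by module⟩
    · exact Or.inr ⟨i, 1, Or.inl rfl, by module⟩
    · exact Or.inl ⟨i, j, -1, 1, ne_of_lt hij, Or.inr rfl, Or.inl rfl, by rw [eq_neg_of_neg_eq h]; module⟩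
    · exact Or.inl ⟨i, j, -1, -1, ne_of_lt hij, Or.inr rfl, Or.inr rfl, by rw [eq_neg_of_neg_eq h]; module⟩
    · exact Or.inr ⟨i, -1, Or.inr rfl, by rw [eq_neg_of_neg_eq h]; module⟩
  · rintro (⟨i, j, a, b, hij, (rfl | rfl), (rfl | rfl), rfl⟩ | ⟨i, a, (rfl | rfl), rfl⟩)
    · rcases lt_or_gt_of_ne hij with h | h
      · exact Or.inl (Or.inl ⟨i, j, h, Or.inr (by module)⟩)
      · exact Or.inl (Or.inl ⟨j, i, h, Or.inr (by module)⟩)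
    · rcases lt_or_gt_of_ne hij with h | h
      · exact Or.inl (Or.inl ⟨i, j, h, Or.inl (by module)⟩)
      · exact Or.inr (Or.inl ⟨j, i, h, Or.inl (by module)⟩)
    · rcases lt_or_gt_of_ne hij with h | h
      · exact Or.inr (Or.inl ⟨i, j, h, Or.inl (by module)⟩)
      · exact Or.inl (Or.inl ⟨j, i, h, Or.inl (by module)⟩)
    · rcases lt_or_gt_of_ne hij with h | h
      · exact Or.inr (Or.inl ⟨i, j, h, Or.inr (by module)⟩)
      · exact Or.inr (Or.inl ⟨j, i, h, Or.inr (by module)⟩)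
    · exact Or.inl (Or.inr ⟨i, by module⟩)
    · exact Or.inr (Or.inr ⟨i, by module⟩)

lemma repC (n : ℕ) (v : Fin n → ℝ) : (v ∈ PhiC n ∨ -v ∈ PhiC n) ↔ (isD n v ∨ isL n v) := by
  constructor
  · rintro ((⟨i, j, hij, rfl | rfl⟩ | ⟨i, rfl⟩) | (⟨i, j, hij, h | h⟩ | ⟨i, h⟩))
    · exact Or.inl ⟨i, j, 1, -1, ne_of_lt hij, Or.inl rfl, Or.inr rfl, by module⟩
    · exact Or.inl ⟨i, j, 1, 1, ne_of_lt hij, Or.inl rfl, Or.inl rfl, by module⟩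
    · exact Or.inr ⟨i, 1, Or.inl rfl, by module⟩
    · exact Or.inl ⟨i, j, -1, 1, ne_of_lt hij, Or.inr rfl, Or.inl rfl, by rw [eq_neg_of_neg_eq h]; module⟩
    · exact Or.inl ⟨i, j, -1, -1, ne_of_lt hij, Or.inr rfl, Or.inr rfl, by rw [eq_neg_of_neg_eq h]; module⟩
    · exact Or.inr ⟨i, -1, Or.inr rfl, by rw [eq_neg_of_neg_eq h]; module⟩
  · rintro (⟨i, j, a, b, hij, (rfl | rfl), (rfl | rfl), rfl⟩ | ⟨i, a, (rfl | rfl), rfl⟩)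
    · rcases lt_or_gt_of_ne hij with h | h
      · exact Or.inl (Or.inl ⟨i, j, h, Or.inr (by module)⟩)
      · exact Or.inl (Or.inl ⟨j, i, h, Or.inr (by module)⟩)
    · rcases lt_or_gt_of_ne hij with h | h
      · exact Or.inl (Or.inl ⟨i, j, h, Or.inl (by module)⟩)
      · exact Or.inr (Or.inl ⟨j, i, h, Or.inl (by module)⟩)
    · rcases lt_or_gt_of_ne hij with h | h
      · exact Or.inr (Or.inl ⟨i, j, h, Or.inl (by module)⟩)
      · exact Or.inl (Or.inl ⟨j, i, h, Or.inl (by module)⟩)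
    · rcases lt_or_gt_of_ne hij with h | h
      · exact Or.inr (Or.inl ⟨i, j, h, Or.inr (by module)⟩)
      · exact Or.inr (Or.inl ⟨j, i, h, Or.inr (by module)⟩)
    · exact Or.inl (Or.inr ⟨i, by module⟩)
    · exact Or.inr (Or.inr ⟨i, by module⟩)

def ip (n : ℕ) (v w : Fin n → ℝ) : ℝ := ∑ i, v i * w i

def ff (n : ℕ) (v : Fin n → ℝ) : ℝ := ∑ i : Fin n, ((n : ℝ) - (i.val : ℝ)) * v i

lemma ip_eps_eps (n : ℕ) (i j : Fin n) : ip n (eps n i) (eps n j) = if i = j then 1 else 0 := by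
  classical
  by_cases h : i = j
  · subst h
    simp [ip, eps, Pi.single_apply]
  · simp only [ip, eps, Pi.single_apply, ite_mul, one_mul, zero_mul]
    rw [if_neg h]
    refine Finset.sum_eq_zero fun k _ => ?_
    by_cases hk : k = i
    · subst hk; rw [if_pos rfl, if_neg h]
    · rw [if_neg hk]

lemma ff_eps (n : ℕ) (i : Fin n) : ff n (eps n i) = (n : ℝ) - i := by
  simp only [ff, eps, Pi.single_apply, mul_ite, mul_one, mul_zero]
  rw [Finset.sum_ite_eq' Finset.univ i fun k => ((n:ℝ) - (k.val:ℝ))]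
  simp

lemma ip_add_left (n : ℕ) (u v w : Fin n → ℝ) : ip n (u + v) w = ip n u w + ip n v w := by
  simp [ip, add_mul, Finset.sum_add_distrib]

lemma ip_add_right (n : ℕ) (u v w : Fin n → ℝ) : ip n u (v + w) = ip n u v + ip n u w := by
  simp [ip, mul_add, Finset.sum_add_distrib]

lemma ip_smul_left (n : ℕ) (a : ℝ) (v w : Fin n → ℝ) : ip n (a • v) w = a * ip n v w := by
  simp [ip, Finset.mul_sum, mul_assoc]

lemma ip_smul_right (n : ℕ) (a : ℝ) (v w : Fin n → ℝ) : ip n v (a • w) = a * ip n v w := by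
  simp [ip, Finset.mul_sum]; ring_nf; simp [mul_comm, mul_assoc, mul_left_comm]

lemma ip_neg_right (n : ℕ) (v w : Fin n → ℝ) : ip n v (-w) = -ip n v w := by
  simp [ip]

lemma ip_sub_left (n : ℕ) (u v w : Fin n → ℝ) : ip n (u - v) w = ip n u w - ip n v w := by
  simp [ip, sub_mul, Finset.sum_sub_distrib]

lemma ip_comm (n : ℕ) (v w : Fin n → ℝ) : ip n v w = ip n w v := by
  simp [ip, mul_comm]

lemma ip_self_pos (n : ℕ) (v : Fin n → ℝ) (hv : v ≠ 0) : 0 < ip n v v := by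
  have h : ∃ i, v i ≠ 0 := by
    by_contra h
    push_neg at h
    exact hv (funext fun i => h i)
  obtain ⟨i, hi⟩ := h
  have : (0:ℝ) < v i * v i := mul_self_pos.mpr hi
  refine Finset.sum_pos' (fun k _ => mul_self_nonneg _) ⟨i, Finset.mem_univ i, this⟩

lemma ff_add (n : ℕ) (v w : Fin n → ℝ) : ff n (v + w) = ff n v + ff n w := by
  simp [ff, mul_add, Finset.sum_add_distrib]

lemma ff_neg (n : ℕ) (v : Fin n → ℝ) : ff n (-v) = -ff n v := by
  simp [ff]

lemma ff_zero (n : ℕ) : ff n 0 = 0 := by simp [ff]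

lemma ip_list_sum (n : ℕ) (v : Fin n → ℝ) (l : List (Fin n → ℝ)) :
    ip n v l.sum = (l.map (ip n v)).sum := by
  induction l with
  | nil => simp [ip]
  | cons a t ih => simp [List.sum_cons, ip_add_right, ih]

lemma ff_list_sum (n : ℕ) (l : List (Fin n → ℝ)) : ff n l.sum = (l.map (ff n)).sum := by
  induction l with
  | nil => simp [ff_zero]
  | cons a t ih => simp [List.sum_cons, ff_add, ih]

lemma ip_sub_right (n : ℕ) (u v w : Fin n → ℝ) : ip n u (v - w) = ip n u v - ip n u w := by
  simp [ip, mul_sub, Finset.sum_sub_distrib]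


section Core
variable {n : ℕ}

lemma core_DD {v w : Fin n → ℝ} (hv : isD n v) (hw : isD n w) (hip : ip n v w < 0) :
    v + w = 0 ∨ isD n (v + w) := by
  obtain ⟨i, j, a, b, hij, ha, hb, rfl⟩ := hv
  obtain ⟨k, l, c, d, hkl, hc, hd, rfl⟩ := hw
  simp only [ip_add_left, ip_add_right, ip_smul_left, ip_smul_right, ip_eps_eps] at hip
  by_cases p1 : i = k
  · subst p1
    by_cases p4 : j = l
    · subst p4
      simp [hij, Ne.symm hij] at hip
      rcases ha with rfl | rfl <;> rcases hb with rfl | rfl <;>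
        rcases hc with rfl | rfl <;> rcases hd with rfl | rfl <;>
        norm_num at hip <;> exact Or.inl (by module)
    · have h2 : i ≠ l := hkl
      simp [h2, p4, Ne.symm hij] at hip
      rcases ha with rfl | rfl <;> rcases hc with rfl | rfl <;> norm_num at hip <;>
        exact Or.inr ⟨j, l, b, d, p4, hb, hd, by module⟩
  · by_cases p2 : i = l
    · subst p2
      by_cases p3 : j = k
      · subst p3
        simp [hij, Ne.symm hij] at hip
        rcases ha with rfl | rfl <;> rcases hb with rfl | rfl <;>
          rcases hc with rfl | rfl <;> rcases hd with rfl | rfl <;>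
          norm_num at hip <;> exact Or.inl (by module)
      · simp [p1, p3, Ne.symm hij] at hip
        rcases ha with rfl | rfl <;> rcases hd with rfl | rfl <;> norm_num at hip <;>
          exact Or.inr ⟨j, k, b, c, p3, hb, hc, by module⟩
    · by_cases p3 : j = k
      · subst p3
        simp [hij, p2, hkl] at hip
        rcases hb with rfl | rfl <;> rcases hc with rfl | rfl <;> norm_num at hip <;>
          exact Or.inr ⟨i, l, a, d, p2, ha, hd, by module⟩
      · by_cases p4 : j = l
        · subst p4
          simp [p1, hij, p3] at hip
          rcases hb with rfl | rfl <;> rcases hd with rfl | rfl <;> norm_num at hip <;>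
            exact Or.inr ⟨i, k, a, c, p1, ha, hc, by module⟩
        · simp [p1, p2, p3, p4] at hip

lemma core_DS {v w : Fin n → ℝ} (hv : isD n v) (hw : isS n w) (hip : ip n v w < 0) :
    isS n (v + w) := by
  obtain ⟨i, j, a, b, hij, ha, hb, rfl⟩ := hv
  obtain ⟨k, c, hc, rfl⟩ := hw
  simp only [ip_add_left, ip_add_right, ip_smul_left, ip_smul_right, ip_eps_eps] at hip
  by_cases p1 : i = k
  · subst p1
    simp [Ne.symm hij] at hip
    rcases ha with rfl | rfl <;> rcases hc with rfl | rfl <;> norm_num at hip <;>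
      exact ⟨j, b, hb, by module⟩
  · by_cases p3 : j = k
    · subst p3
      simp [p1] at hip
      rcases hb with rfl | rfl <;> rcases hc with rfl | rfl <;> norm_num at hip <;>
        exact ⟨i, a, ha, by module⟩
    · simp [p1, p3] at hip

lemma core_SS {v w : Fin n → ℝ} (hv : isS n v) (hw : isS n w) (hip : ip n v w < 0) :
    v + w = 0 := by
  obtain ⟨i, a, ha, rfl⟩ := hv
  obtain ⟨k, c, hc, rfl⟩ := hw
  simp only [ip_smul_left, ip_smul_right, ip_eps_eps] at hip
  by_cases p1 : i = k
  · subst p1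
    simp at hip
    rcases ha with rfl | rfl <;> rcases hc with rfl | rfl <;> norm_num at hip <;> module
  · simp [p1] at hip

lemma core_DL {v w : Fin n → ℝ} (hv : isD n v) (hw : isL n w) (hip : ip n v w < 0) :
    isD n (v + w) := by
  obtain ⟨i, j, a, b, hij, ha, hb, rfl⟩ := hv
  obtain ⟨k, c, hc, rfl⟩ := hw
  simp only [ip_add_left, ip_add_right, ip_smul_left, ip_smul_right, ip_eps_eps] at hip
  by_cases p1 : i = k
  · subst p1
    simp [Ne.symm hij] at hip
    rcases ha with rfl | rfl <;> rcases hc with rfl | rfl <;> norm_num at hip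
    · exact ⟨i, j, -1, b, hij, Or.inr rfl, hb, by module⟩
    · exact ⟨i, j, 1, b, hij, Or.inl rfl, hb, by module⟩
  · by_cases p3 : j = k
    · subst p3
      simp [p1] at hip
      rcases hb with rfl | rfl <;> rcases hc with rfl | rfl <;> norm_num at hip
      · exact ⟨i, j, a, -1, hij, ha, Or.inr rfl, by module⟩
      · exact ⟨i, j, a, 1, hij, ha, Or.inl rfl, by module⟩
    · simp [p1, p3] at hip

lemma core_LL {v w : Fin n → ℝ} (hv : isL n v) (hw : isL n w) (hip : ip n v w < 0) :
    v + w = 0 := by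
  obtain ⟨i, a, ha, rfl⟩ := hv
  obtain ⟨k, c, hc, rfl⟩ := hw
  simp only [ip_smul_left, ip_smul_right, ip_eps_eps] at hip
  by_cases p1 : i = k
  · subst p1
    simp at hip
    rcases ha with rfl | rfl <;> rcases hc with rfl | rfl <;> norm_num at hip <;> module
  · simp [p1] at hip

lemma core_AA {v w : Fin n → ℝ} (hv : isA n v) (hw : isA n w) (hip : ip n v w < 0) :
    v + w = 0 ∨ isA n (v + w) := by
  obtain ⟨i, j, hij, rfl⟩ := hv
  obtain ⟨k, l, hkl, rfl⟩ := hw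
  simp only [ip_sub_left, ip_sub_right, ip_eps_eps] at hip
  by_cases p2 : i = l
  · subst p2
    by_cases p3 : j = k
    · subst p3
      exact Or.inl (by module)
    · exact Or.inr ⟨k, j, fun h => p3 h.symm, by module⟩
  · by_cases p3 : j = k
    · subst p3
      exact Or.inr ⟨i, l, p2, by module⟩
    · exfalso
      simp [p2, p3] at hip
      split_ifs at hip <;> norm_num at hip

end Core

section Pos
variable {n : ℕ}

lemma ff_sub (n : ℕ) (v w : Fin n → ℝ) : ff n (v - w) = ff n v - ff n w := by
  simp [ff, mul_sub, Finset.sum_sub_distrib]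

lemma ff_eps_pos (i : Fin n) : 0 < ff n (eps n i) := by
  rw [ff_eps]
  have : (i : ℝ) < n := by exact_mod_cast i.isLt
  linarith

lemma ff_sub_pos {i j : Fin n} (hij : i < j) : 0 < ff n (eps n i - eps n j) := by
  rw [ff_sub, ff_eps, ff_eps]
  have : (i : ℝ) < (j : ℝ) := by exact_mod_cast hij
  linarith

lemma ff_add_pos (i j : Fin n) : 0 < ff n (eps n i + eps n j) := by
  rw [ff_add]
  linarith [ff_eps_pos i, ff_eps_pos j]

lemma posA : ∀ v ∈ PhiA n, 0 < ff n v := by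
  rintro v ⟨i, j, hij, rfl⟩; exact ff_sub_pos hij

lemma posB : ∀ v ∈ PhiB n, 0 < ff n v := by
  rintro v (⟨i, j, hij, rfl | rfl⟩ | ⟨i, rfl⟩)
  · exact ff_sub_pos hij
  · exact ff_add_pos i j
  · exact ff_eps_pos i

lemma posC : ∀ v ∈ PhiC n, 0 < ff n v := by
  rintro v (⟨i, j, hij, rfl | rfl⟩ | ⟨i, rfl⟩)
  · exact ff_sub_pos hij
  · exact ff_add_pos i j
  · exact ff_add_pos i i

lemma posD : ∀ v ∈ PhiD n, 0 < ff n v := by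
  rintro v ⟨i, j, hij, rfl | rfl⟩
  · exact ff_sub_pos hij
  · exact ff_add_pos i j

lemma coreA' (n : ℕ) : ∀ v w : Fin n → ℝ, (v ∈ PhiA n ∨ -v ∈ PhiA n) →
    (w ∈ PhiA n ∨ -w ∈ PhiA n) → ip n v w < 0 →
    v + w = 0 ∨ ((v + w) ∈ PhiA n ∨ -(v + w) ∈ PhiA n) := by
  intro v w hv hw hip
  rcases core_AA ((repA n v).mp hv) ((repA n w).mp hw) hip with h | h
  · exact Or.inl h
  · exact Or.inr ((repA n _).mpr h)

lemma coreD' (n : ℕ) : ∀ v w : Fin n → ℝ, (v ∈ PhiD n ∨ -v ∈ PhiD n) →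
    (w ∈ PhiD n ∨ -w ∈ PhiD n) → ip n v w < 0 →
    v + w = 0 ∨ ((v + w) ∈ PhiD n ∨ -(v + w) ∈ PhiD n) := by
  intro v w hv hw hip
  rcases core_DD ((repD n v).mp hv) ((repD n w).mp hw) hip with h | h
  · exact Or.inl h
  · exact Or.inr ((repD n _).mpr h)

lemma coreB' (n : ℕ) : ∀ v w : Fin n → ℝ, (v ∈ PhiB n ∨ -v ∈ PhiB n) →
    (w ∈ PhiB n ∨ -w ∈ PhiB n) → ip n v w < 0 →
    v + w = 0 ∨ ((v + w) ∈ PhiB n ∨ -(v + w) ∈ PhiB n) := by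
  intro v w hv hw hip
  rcases (repB n v).mp hv with hv' | hv' <;> rcases (repB n w).mp hw with hw' | hw'
  · rcases core_DD hv' hw' hip with h | h
    · exact Or.inl h
    · exact Or.inr ((repB n _).mpr (Or.inl h))
  · exact Or.inr ((repB n _).mpr (Or.inr (core_DS hv' hw' hip)))
  · have h := core_DS hw' hv' (by rwa [ip_comm])
    rw [add_comm] at h
    exact Or.inr ((repB n _).mpr (Or.inr h))
  · exact Or.inl (core_SS hv' hw' hip)

lemma coreC' (n : ℕ) : ∀ v w : Fin n → ℝ, (v ∈ PhiC n ∨ -v ∈ PhiC n) →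
    (w ∈ PhiC n ∨ -w ∈ PhiC n) → ip n v w < 0 →
    v + w = 0 ∨ ((v + w) ∈ PhiC n ∨ -(v + w) ∈ PhiC n) := by
  intro v w hv hw hip
  rcases (repC n v).mp hv with hv' | hv' <;> rcases (repC n w).mp hw with hw' | hw'
  · rcases core_DD hv' hw' hip with h | h
    · exact Or.inl h
    · exact Or.inr ((repC n _).mpr (Or.inl h))
  · exact Or.inr ((repC n _).mpr (Or.inl (core_DL hv' hw' hip)))
  · have h := core_DL hw' hv' (by rwa [ip_comm])
    rw [add_comm] at h
    exact Or.inr ((repC n _).mpr (Or.inl h))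
  · exact Or.inl (core_LL hv' hw' hip)

end Pos

section KL
variable {n : ℕ}

lemma list_sum_nonpos {l : List ℝ} (h : ∀ x ∈ l, x ≤ 0) : l.sum ≤ 0 := by
  induction l with
  | nil => simp
  | cons a t ih =>
    simp only [List.sum_cons]
    have := h a (List.mem_cons_self)
    have := ih fun x hx => h x (List.mem_cons_of_mem a hx)
    linarith

lemma ff_sum_nonneg (Φ : Set (Fin n → ℝ)) (hpos : ∀ v ∈ Φ, 0 < ff n v)
    {l : List (Fin n → ℝ)} (h : ∀ x ∈ l, x ∈ Φ) : 0 ≤ ff n l.sum := by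
  induction l with
  | nil => simp [ff_zero]
  | cons a t ih =>
    rw [List.sum_cons, ff_add]
    have h1 := hpos a (h a (List.mem_cons_self))
    have h2 := ih fun x hx => h x (List.mem_cons_of_mem a hx)
    linarith

lemma ff_sum_pos (Φ : Set (Fin n → ℝ)) (hpos : ∀ v ∈ Φ, 0 < ff n v)
    {l : List (Fin n → ℝ)} (hne : l ≠ []) (h : ∀ x ∈ l, x ∈ Φ) : 0 < ff n l.sum := by
  rcases l with _ | ⟨a, t⟩
  · exact absurd rfl hne
  · rw [List.sum_cons, ff_add]
    have h1 := hpos a (h a (List.mem_cons_self))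
    have h2 := ff_sum_nonneg Φ hpos fun x hx => h x (List.mem_cons_of_mem a hx)
    linarith

lemma KL (Φ : Set (Fin n → ℝ))
    (hpos : ∀ v ∈ Φ, 0 < ff n v)
    (core : ∀ v w : Fin n → ℝ, (v ∈ Φ ∨ -v ∈ Φ) → (w ∈ Φ ∨ -w ∈ Φ) → ip n v w < 0 →
      v + w = 0 ∨ ((v + w) ∈ Φ ∨ -(v + w) ∈ Φ))
    {α β : Fin n → ℝ} {l : List (Fin n → ℝ)} (hα : α ∈ Φ) (hβ : β ∈ Φ)
    (hne : l ≠ []) (hlΦ : ∀ γ ∈ l, γ ∈ Φ) (hsum : β = α + l.sum) :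
    ∃ γ ∈ l, α + γ ∈ Φ ∨ β - γ ∈ Φ := by
  have hffsum : 0 < ff n l.sum := ff_sum_pos Φ hpos hne hlΦ
  have hsum' : β - α = l.sum := by rw [hsum]; abel
  have hβα : β - α ≠ 0 := by
    intro h0
    rw [h0] at hsum'
    rw [← hsum', ff_zero] at hffsum
    exact lt_irrefl 0 hffsum
  have hvv : 0 < ip n (β - α) (β - α) := ip_self_pos n _ hβα
  have hex : ∃ γ ∈ l, 0 < ip n (β - α) γ := by
    by_contra hcon
    push_neg at hcon
    have hle : ip n (β - α) l.sum ≤ 0 := by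
      rw [ip_list_sum]
      apply list_sum_nonpos
      intro x hx
      obtain ⟨y, hy, rfl⟩ := List.mem_map.mp hx
      exact hcon y hy
    rw [← hsum'] at hle
    linarith
  obtain ⟨γ, hγl, hγ⟩ := hex
  have hγΦ := hlΦ γ hγl
  by_cases haγ : ip n α γ < 0
  · rcases core α γ (Or.inl hα) (Or.inl hγΦ) haγ with h0 | hmem | hneg
    · exfalso
      have h1 := congrArg (ff n) h0
      rw [ff_add, ff_zero] at h1
      linarith [hpos α hα, hpos γ hγΦ]
    · exact ⟨γ, hγl, Or.inl hmem⟩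
    · exfalso
      have h1 := hpos _ hneg
      rw [ff_neg, ff_add] at h1
      linarith [hpos α hα, hpos γ hγΦ]
  · have haγ' : 0 ≤ ip n α γ := not_lt.mp haγ
    have hβγ : 0 < ip n β γ := by
      have h1 : ip n (β - α) γ = ip n β γ - ip n α γ := ip_sub_left n β α γ
      linarith
    have hipn : ip n β (-γ) < 0 := by rw [ip_neg_right]; linarith
    have hγR : (-γ) ∈ Φ ∨ -(-γ) ∈ Φ := Or.inr (by rwa [neg_neg])
    have hperm := List.perm_cons_erase hγl
    have hsum2 : l.sum = γ + (l.erase γ).sum := by rw [hperm.sum_eq]; simp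
    have herΦ : ∀ x ∈ l.erase γ, x ∈ Φ := fun x hx => hlΦ x (List.mem_of_mem_erase hx)
    have hernn : 0 ≤ ff n (l.erase γ).sum := ff_sum_nonneg Φ hpos herΦ
    rcases core β (-γ) (Or.inl hβ) hγR hipn with h0 | hmem | hneg
    · exfalso
      have hβγ' : β = γ := add_neg_eq_zero.mp h0
      have hveq : α + (l.erase γ).sum = 0 := by
        have h2 : γ = α + (γ + (l.erase γ).sum) := by nth_rewrite 1 [← hβγ']; rw [hsum, hsum2]
        calc α + (l.erase γ).sum = (α + (γ + (l.erase γ).sum)) - γ := by abel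
          _ = γ - γ := by rw [← h2]
          _ = 0 := sub_self γ
      have h1 := congrArg (ff n) hveq
      rw [ff_add, ff_zero] at h1
      linarith [hpos α hα]
    · exact ⟨γ, hγl, Or.inr (by rwa [← sub_eq_add_neg] at hmem)⟩
    · exfalso
      have hmem' : γ - β ∈ Φ := by rwa [show -(β + -γ) = γ - β by abel] at hneg
      have hveq : γ - β = -(α + (l.erase γ).sum) := by rw [hsum, hsum2]; abel
      have h1 := hpos _ hmem'
      rw [hveq, ff_neg, ff_add] at h1
      linarith [hpos α hα]

end KL

lemma general (n : ℕ) (Φ : Set (Fin n → ℝ))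
    (hpos : ∀ v ∈ Φ, 0 < ff n v)
    (core : ∀ v w : Fin n → ℝ, (v ∈ Φ ∨ -v ∈ Φ) → (w ∈ Φ ∨ -w ∈ Φ) → ip n v w < 0 →
      v + w = 0 ∨ ((v + w) ∈ Φ ∨ -(v + w) ∈ Φ)) :
    ∀ (m : ℕ) (l : List (Fin n → ℝ)) (α β : Fin n → ℝ), l.length = m → l ≠ [] →
      (∀ γ ∈ l, γ ∈ Φ) → α ∈ Φ → β ∈ Φ → β = α + l.sum →
      ∃ out : List (Fin n → ℝ), out ≠ [] ∧ (∀ γ ∈ out, γ ∈ Φ) ∧ β = α + out.sum ∧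
        ∀ k : ℕ, 1 ≤ k → k ≤ out.length → α + (out.take k).sum ∈ Φ := by
  intro m
  induction m with
  | zero =>
    intro l α β hlen hne _ _ _ _
    exact absurd (List.length_eq_zero_iff.mp hlen) hne
  | succ m ih =>
    intro l α β hlen hne hlΦ hα hβ hsum
    rcases Nat.eq_zero_or_pos m with rfl | hm
    · obtain ⟨a, rfl⟩ := List.length_eq_one_iff.mp hlen
      refine ⟨[a], by simp, hlΦ, hsum, ?_⟩
      intro k hk1 hk2
      simp only [List.length_singleton] at hk2
      have hk : k = 1 := le_antisymm hk2 hk1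
      subst hk
      have hab : α + ([a].take 1).sum = β := by
        rw [hsum]; simp
      rw [hab]; exact hβ
    · obtain ⟨γ, hγl, hcase⟩ := KL Φ hpos core hα hβ hne hlΦ hsum
      have hperm := List.perm_cons_erase hγl
      have hsum2 : l.sum = γ + (l.erase γ).sum := by rw [hperm.sum_eq]; simp
      have hlen2 : (l.erase γ).length = m := by
        have h1 := hperm.length_eq
        rw [hlen] at h1
        simp only [List.length_cons] at h1
        omega
      have hne2 : l.erase γ ≠ [] := by
        intro h
        rw [h] at hlen2
        simp at hlen2
        omega
      have herΦ : ∀ x ∈ l.erase γ, x ∈ Φ := fun x hx => hlΦ x (List.mem_of_mem_erase hx)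
      have hγΦ := hlΦ γ hγl
      rcases hcase with hαγ | hβγ
      · have hsum' : β = (α + γ) + (l.erase γ).sum := by rw [hsum, hsum2, ← add_assoc]
        obtain ⟨out, hone, homem, hosum, hopart⟩ :=
          ih (l.erase γ) (α + γ) β hlen2 hne2 herΦ hαγ hβ hsum'
        refine ⟨γ :: out, by simp, ?_, ?_, ?_⟩
        · intro x hx
          rcases List.mem_cons.mp hx with rfl | hx
          · exact hγΦ
          · exact homem x hx
        · rw [List.sum_cons, ← add_assoc]; exact hosum
        · intro k hk1 hk2
          obtain ⟨k', rfl⟩ := Nat.exists_eq_add_of_le hk1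
          rcases Nat.eq_zero_or_pos k' with rfl | hk'
          · have : α + ((γ :: out).take 1).sum = α + γ := by simp
            rw [this]; exact hαγ
          · have htake : (γ :: out).take (1 + k') = γ :: out.take k' := by
              rw [Nat.add_comm 1 k']
              rfl
            rw [htake, List.sum_cons, ← add_assoc]
            apply hopart k' hk'
            simp only [List.length_cons] at hk2
            omega
      · have hsum' : β - γ = α + (l.erase γ).sum := by rw [hsum, hsum2]; abel
        obtain ⟨out, hone, homem, hosum, hopart⟩ :=
          ih (l.erase γ) α (β - γ) hlen2 hne2 herΦ hα hβγ hsum'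
        have hfull : α + (out ++ [γ]).sum = β := by
          rw [List.sum_append, List.sum_cons, List.sum_nil, add_zero, ← add_assoc, ← hosum]
          abel
        refine ⟨out ++ [γ], by simp, ?_, hfull.symm, ?_⟩
        · intro x hx
          rcases List.mem_append.mp hx with hx | hx
          · exact homem x hx
          · simp only [List.mem_singleton] at hx
            subst hx
            exact hγΦ
        · intro k hk1 hk2
          by_cases hk : k ≤ out.length
          · rw [List.take_append_of_le_length hk]
            exact hopart k hk1 hk
          · have hk' : (out ++ [γ]).length ≤ k := by
              simp only [List.length_append, List.length_singleton] at hk2 ⊢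
              omega
            rw [List.take_of_length_le hk', hfull]
            exact hβ

/-- If `α, β ∈ Φ⁺` (a classical positive root set) and `β - α` is a nonempty sum of
elements of `Φ⁺`, then `β = α + γ₁ + ⋯ + γ_u` with all `γ_i ∈ Φ⁺` and every partial sum
`α + γ₁ + ⋯ + γ_k` (`1 ≤ k ≤ u`) again in `Φ⁺`. -/
theorem partial_sums_in_roots (n : ℕ) (hn : 1 ≤ n) (Φ : Set (Fin n → ℝ))
    (hΦ : Φ = PhiA n ∨ Φ = PhiB n ∨ Φ = PhiC n ∨ Φ = PhiD n)
    (α β : Fin n → ℝ) (hα : α ∈ Φ) (hβ : β ∈ Φ)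
    (h : ∃ l : List (Fin n → ℝ), l ≠ [] ∧ (∀ γ ∈ l, γ ∈ Φ) ∧ β - α = l.sum) :
    ∃ l : List (Fin n → ℝ), l ≠ [] ∧ (∀ γ ∈ l, γ ∈ Φ) ∧ β = α + l.sum ∧
      ∀ k : ℕ, 1 ≤ k → k ≤ l.length → α + (l.take k).sum ∈ Φ := by
  obtain ⟨l, hne, hmem, hs⟩ := h
  have hsum : β = α + l.sum := by rw [← hs]; abel
  rcases hΦ with rfl | rfl | rfl | rfl
  · exact general n _ posA (coreA' n) l.length l α β rfl hne hmem hα hβ hsum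
  · exact general n _ posB (coreB' n) l.length l α β rfl hne hmem hα hβ hsum
  · exact general n _ posC (coreC' n) l.length l α β rfl hne hmem hα hβ hsum
  · exact general n _ posD (coreD' n) l.length l α β rfl hne hmem hα hβ hsum
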